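/- Let n ≥ 2 and 1 ≤ k ≤ n-1 be integers. The (n-1)-dimensional volume of {x ∈ [0,1)^{n-1} : ⌈x_1 + ... + x_{n-1}⌉ = k} equals A(n-1, k)/(n-1)!, where A denotes the Eulerian numbers and ⌈·⌉ is the ceiling function. -/

import Mathlib

def eulerianA : ℕ → ℕ → ℤ
  | 0, _ => 0
  | 1, k => if k = 1 then 1 else 0
  | n + 2, k => ((n + 2 - k + 1 : ℕ) : ℤ) * eulerianA (n + 1) (k - 1)
      + (k : ℤ) * eulerianA (n + 1) k

open MeasureTheory intervalIntegral


noncomputable def fIH (m : ℕ) (t : ℝ) : ℝ :=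
  (∑ j ∈ Finset.range (m + 1), (-1 : ℝ) ^ j * (m.choose j : ℝ) * max (t - j) 0 ^ m)
    / (m.factorial : ℝ)

lemma continuous_fIH (m : ℕ) : Continuous (fIH m) := by
  apply Continuous.div_const
  apply continuous_finset_sum
  intro j _
  exact continuous_const.mul (((continuous_id.sub continuous_const).max continuous_const).pow m)

lemma hasDerivAt_maxpow (m : ℕ) (hm : 1 ≤ m) (s : ℝ) :
    HasDerivAt (fun x : ℝ => max x 0 ^ (m + 1)) (((m : ℝ) + 1) * max s 0 ^ m) s := by
  rcases lt_trichotomy s 0 with h | h | h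
  · have hev : (fun x : ℝ => max x 0 ^ (m + 1)) =ᶠ[nhds s] fun _ => (0 : ℝ) := by
      filter_upwards [Iio_mem_nhds h] with x hx
      rw [max_eq_right (le_of_lt hx), zero_pow (by omega)]
    have h0 : HasDerivAt (fun _ : ℝ => (0 : ℝ)) 0 s := hasDerivAt_const s 0
    have := h0.congr_of_eventuallyEq hev
    simpa [max_eq_right h.le, zero_pow (by omega : m ≠ 0)] using this
  · subst h
    rw [hasDerivAt_iff_tendsto_slope]
    have hval : ((m : ℝ) + 1) * max (0 : ℝ) 0 ^ m = 0 := by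
      simp [zero_pow (by omega : m ≠ 0)]
    rw [hval]
    apply squeeze_zero_norm (a := fun x : ℝ => |x| ^ m)
    · intro x
      rw [slope_def_field]
      simp only [max_self, zero_pow (by omega : m + 1 ≠ 0), sub_zero]
      rw [div_eq_mul_inv, norm_mul, norm_pow, norm_inv]
      calc ‖max x 0‖ ^ (m + 1) * ‖x‖⁻¹ ≤ ‖x‖ ^ (m + 1) * ‖x‖⁻¹ := by
            apply mul_le_mul_of_nonneg_right _ (by positivity)
            apply pow_le_pow_left₀ (norm_nonneg _)
            rw [Real.norm_eq_abs, Real.norm_eq_abs]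
            rcases le_total x 0 with hx | hx
            · rw [max_eq_right hx]; simp [abs_nonneg]
            · rw [max_eq_left hx]
        _ ≤ |x| ^ m := by
            rw [Real.norm_eq_abs, pow_succ]
            rcases eq_or_ne x 0 with rfl | hx
            · simp
            · rw [mul_assoc, mul_inv_cancel₀ (by simpa using hx), mul_one]
    · have : Filter.Tendsto (fun x : ℝ => |x| ^ m) (nhds 0) (nhds 0) := by
        have := ((continuous_abs.pow m).tendsto (0 : ℝ))
        have h' : Filter.Tendsto (fun x : ℝ => |x| ^ m) (nhds 0) (nhds (|(0:ℝ)| ^ m)) := this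
        rwa [abs_zero, zero_pow (by omega : m ≠ 0)] at h'
      exact this.mono_left nhdsWithin_le_nhds
  · have hev : (fun x : ℝ => max x 0 ^ (m + 1)) =ᶠ[nhds s] fun x => x ^ (m + 1) := by
      filter_upwards [Ioi_mem_nhds h] with x hx
      rw [max_eq_left (le_of_lt hx)]
    have h0 : HasDerivAt (fun x : ℝ => x ^ (m + 1)) (((m : ℝ) + 1) * s ^ m) s := by
      simpa using hasDerivAt_pow (m + 1) s
    have := h0.congr_of_eventuallyEq hev
    simpa [max_eq_left h.le] using this

lemma integral_maxpow (m : ℕ) (hm : 1 ≤ m) (a : ℝ) :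
    ∫ u in (0:ℝ)..1, max (a - u) 0 ^ m
      = (max a 0 ^ (m + 1) - max (a - 1) 0 ^ (m + 1)) / ((m : ℝ) + 1) := by
  obtain ⟨m', rfl⟩ : ∃ m', m = m' + 1 := ⟨m - 1, by omega⟩
  set M := m' + 1 with hM
  have key : ∀ u : ℝ, HasDerivAt (fun v : ℝ => -(max (a - v) 0 ^ (M + 1)) / ((M : ℝ) + 1))
      (max (a - u) 0 ^ M) u := by
    intro u
    have h1 : HasDerivAt (fun v : ℝ => a - v) (-1) u := (hasDerivAt_id u).const_sub a
    have h2 := (hasDerivAt_maxpow M hm (a - u)).comp u h1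
    have h3 := (h2.neg).div_const ((M : ℝ) + 1)
    refine h3.congr_deriv ?_
    rw [div_eq_iff (by positivity)]
    ring
  have hcont : IntervalIntegrable (fun u : ℝ => max (a - u) 0 ^ M) volume 0 1 :=
    (((continuous_const.sub continuous_id).max continuous_const).pow M).intervalIntegrable 0 1
  rw [integral_eq_sub_of_hasDerivAt (fun u _ => key u) hcont]
  ring

lemma sum_pascal_shift (m : ℕ) (P : ℕ → ℝ) :
    ∑ j ∈ Finset.range (m + 2), (-1:ℝ)^j * (((m+1).choose j) : ℝ) * P j
      = ∑ j ∈ Finset.range (m + 1), (-1:ℝ)^j * ((m.choose j) : ℝ) * (P j - P (j+1)) := by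
  have e1 : ∑ j ∈ Finset.range (m + 1), (-1:ℝ)^j * ((m.choose j) : ℝ) * (P j - P (j+1))
      = (∑ j ∈ Finset.range (m + 1), (-1:ℝ)^j * ((m.choose j) : ℝ) * P j)
        - ∑ j ∈ Finset.range (m + 1), (-1:ℝ)^j * ((m.choose j) : ℝ) * P (j+1) := by
    rw [← Finset.sum_sub_distrib]
    apply Finset.sum_congr rfl
    intro j _
    ring
  have e2 : ∑ j ∈ Finset.range (m + 1), (-1:ℝ)^j * ((m.choose j) : ℝ) * P j
      = P 0 + ∑ i ∈ Finset.range (m + 1), (-1:ℝ)^(i+1) * ((m.choose (i+1)) : ℝ) * P (i+1) := by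
    have h0 : ∑ j ∈ Finset.range (m + 2), (-1:ℝ)^j * ((m.choose j) : ℝ) * P j
        = ∑ j ∈ Finset.range (m + 1), (-1:ℝ)^j * ((m.choose j) : ℝ) * P j := by
      rw [Finset.sum_range_succ]
      simp [Nat.choose_succ_self]
    rw [← h0, Finset.sum_range_succ' (fun j => (-1:ℝ)^j * ((m.choose j) : ℝ) * P j) (m+1)]
    simp
    ring
  have e3 : ∑ j ∈ Finset.range (m + 1), (-1:ℝ)^j * ((m.choose j) : ℝ) * P (j+1)
      = - ∑ i ∈ Finset.range (m + 1), (-1:ℝ)^(i+1) * ((m.choose i) : ℝ) * P (i+1) := by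
    rw [← Finset.sum_neg_distrib]
    apply Finset.sum_congr rfl
    intro j _
    ring
  rw [e1, e2, e3,
    Finset.sum_range_succ' (fun j => (-1:ℝ)^j * (((m+1).choose j) : ℝ) * P j) (m+1)]
  have e4 : ∀ i ∈ Finset.range (m+1),
      (-1:ℝ)^(i+1) * (((m+1).choose (i+1)) : ℝ) * P (i+1)
      = (-1:ℝ)^(i+1) * ((m.choose i) : ℝ) * P (i+1)
        + (-1:ℝ)^(i+1) * ((m.choose (i+1)) : ℝ) * P (i+1) := by
    intro i _
    rw [Nat.choose_succ_succ]
    push_cast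
    ring
  rw [Finset.sum_congr rfl e4, Finset.sum_add_distrib]
  simp
  ring

lemma integral_fIH (m : ℕ) (hm : 1 ≤ m) (t : ℝ) :
    ∫ u in (0:ℝ)..1, fIH m (t - u) = fIH (m + 1) t := by
  have hcont : ∀ j : ℕ, Continuous (fun u : ℝ => max ((t - j) - u) 0 ^ m) := fun j =>
    ((continuous_const.sub continuous_id).max continuous_const).pow m
  have step1 : ∫ u in (0:ℝ)..1, fIH m (t - u)
      = ∑ j ∈ Finset.range (m + 1),
          ∫ u in (0:ℝ)..1, ((-1:ℝ)^j * (m.choose j : ℝ) / (m.factorial : ℝ))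
            * max ((t - j) - u) 0 ^ m := by
    rw [← intervalIntegral.integral_finset_sum]
    · apply intervalIntegral.integral_congr
      intro u _
      simp only [fIH, Finset.sum_div]
      apply Finset.sum_congr rfl
      intro j _
      rw [show t - u - (j:ℝ) = (t - j) - u from by ring]
      ring
    · intro j _
      exact (continuous_const.mul (hcont j)).intervalIntegrable 0 1
  rw [step1]
  have step2 : ∀ j ∈ Finset.range (m + 1),
      (∫ u in (0:ℝ)..1, ((-1:ℝ)^j * (m.choose j : ℝ) / (m.factorial : ℝ))
            * max ((t - j) - u) 0 ^ m)
      = ((-1:ℝ)^j * (m.choose j : ℝ) / (m.factorial : ℝ))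
          * ((max (t - j) 0 ^ (m+1) - max (t - ((j:ℕ)+1:ℕ)) 0 ^ (m+1)) / ((m:ℝ)+1)) := by
    intro j _
    rw [intervalIntegral.integral_const_mul, integral_maxpow m hm (t - j)]
    congr 3
    push_cast
    ring
  rw [Finset.sum_congr rfl step2, fIH]
  rw [sum_pascal_shift m (fun j => max (t - (j:ℕ)) 0 ^ (m+1))]
  rw [Finset.sum_div]
  apply Finset.sum_congr rfl
  intro j _
  have hfac : (((m+1).factorial : ℕ) : ℝ) = ((m:ℝ) + 1) * (m.factorial : ℝ) := by
    rw [Nat.factorial_succ]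
    push_cast
    ring
  rw [hfac]
  have h1 : (m.factorial : ℝ) ≠ 0 := Nat.cast_ne_zero.mpr (Nat.factorial_ne_zero m)
  have h2 : ((m:ℝ) + 1) ≠ 0 := by positivity
  generalize max (t - (j:ℝ)) 0 ^ (m+1) = A
  generalize max (t - ((j:ℕ)+1:ℕ) : ℝ) 0 ^ (m+1) = B
  field_simp
  try ring
  try exact Or.inl trivial

def Sl (m : ℕ) (t : ℝ) : Set (Fin m → ℝ) :=
  {x | (∀ i, x i ∈ Set.Ico (0:ℝ) 1) ∧ ∑ i, x i ≤ t}

lemma measurableSet_Sl (m : ℕ) (t : ℝ) : MeasurableSet (Sl m t) := by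
  have h1 : MeasurableSet {x : Fin m → ℝ | ∀ i, x i ∈ Set.Ico (0:ℝ) 1} := by
    have : {x : Fin m → ℝ | ∀ i, x i ∈ Set.Ico (0:ℝ) 1}
        = Set.univ.pi (fun _ : Fin m => Set.Ico (0:ℝ) 1) := by
      ext x
      simp [Set.mem_pi]
    rw [this]
    exact MeasurableSet.univ_pi fun _ => measurableSet_Ico
  have h2 : MeasurableSet {x : Fin m → ℝ | ∑ i, x i ≤ t} := by
    apply measurableSet_le _ measurable_const
    exact Finset.measurable_sum _ fun i _ => measurable_pi_apply i
  exact h1.inter h2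

lemma volume_Ico_inter_Iic (t : ℝ) :
    volume (Set.Ico (0:ℝ) 1 ∩ Set.Iic t) = ENNReal.ofReal (max t 0 - max (t - 1) 0) := by
  rcases le_total t 0 with h | h
  · have hsub : Set.Ico (0:ℝ) 1 ∩ Set.Iic t ⊆ {0} := by
      intro y hy
      simp only [Set.mem_Ico, Set.mem_Iic, Set.mem_inter_iff] at hy
      simp only [Set.mem_singleton_iff]
      linarith [hy.1.1, hy.2]
    have h0 : volume (Set.Ico (0:ℝ) 1 ∩ Set.Iic t) = 0 :=
      le_antisymm (le_trans (measure_mono hsub) (by simp)) (by simp)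
    rw [h0, max_eq_right h, max_eq_right (by linarith : t - 1 ≤ 0)]
    simp
  · rcases le_total t 1 with h1 | h1
    · have hsub1 : Set.Ico (0:ℝ) t ⊆ Set.Ico (0:ℝ) 1 ∩ Set.Iic t := by
        intro y hy
        simp only [Set.mem_Ico] at hy
        constructor
        · simp only [Set.mem_Ico]
          constructor
          · exact hy.1
          · linarith [hy.2]
        · simp only [Set.mem_Iic]
          linarith [hy.2]
      have hsub2 : Set.Ico (0:ℝ) 1 ∩ Set.Iic t ⊆ Set.Icc (0:ℝ) t := by
        intro y hy
        simp only [Set.mem_Ico, Set.mem_Iic, Set.mem_inter_iff] at hy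
        exact ⟨hy.1.1, hy.2⟩
      have hIcc : volume (Set.Icc (0:ℝ) t) = ENNReal.ofReal t := by
        rw [Real.volume_Icc]
        norm_num
      have hIco : volume (Set.Ico (0:ℝ) t) = ENNReal.ofReal t := by
        rw [Real.volume_Ico]
        norm_num
      have hv : volume (Set.Ico (0:ℝ) 1 ∩ Set.Iic t) = ENNReal.ofReal t := by
        apply le_antisymm
        · exact le_trans (measure_mono hsub2) (le_of_eq hIcc)
        · exact le_trans (le_of_eq hIco.symm) (measure_mono hsub1)
      rw [hv, max_eq_left h, max_eq_right (by linarith : t - 1 ≤ 0)]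
      norm_num
    · have : Set.Ico (0:ℝ) 1 ∩ Set.Iic t = Set.Ico (0:ℝ) 1 := by
        apply Set.inter_eq_left.mpr
        intro y hy
        simp only [Set.mem_Ico] at hy
        simp only [Set.mem_Iic]
        linarith [hy.2]
      rw [this, Real.volume_Ico, max_eq_left (by linarith : (0:ℝ) ≤ t),
        max_eq_left (by linarith : (0:ℝ) ≤ t - 1)]
      norm_num
  
lemma volume_Sl_one (t : ℝ) : volume (Sl 1 t) = ENNReal.ofReal (fIH 1 t) := by
  have hset : Sl 1 t = (MeasurableEquiv.funUnique (Fin 1) ℝ) ⁻¹' (Set.Ico (0:ℝ) 1 ∩ Set.Iic t) := by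
    ext x
    simp [Sl, MeasurableEquiv.funUnique, Fin.forall_fin_one]
  rw [hset]
  refine ((volume_preserving_funUnique (Fin 1) ℝ).measure_preimage (s := Set.Ico (0:ℝ) 1 ∩ Set.Iic t)
    ((measurableSet_Ico.inter measurableSet_Iic).nullMeasurableSet)).trans ?_
  rw [volume_Ico_inter_Iic]
  congr 1
  simp [fIH, Finset.sum_range_succ]
  ring

lemma fIH_one (t : ℝ) : fIH 1 t = max t 0 - max (t - 1) 0 := by
  simp [fIH, Finset.sum_range_succ]
  ring

lemma fIH_nonneg (m : ℕ) (hm : 1 ≤ m) : ∀ t, 0 ≤ fIH m t := by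
  induction m, hm using Nat.le_induction with
  | base =>
      intro t
      rw [fIH_one, sub_nonneg]
      exact max_le_max (by linarith) le_rfl
  | succ m hm ih =>
      intro t
      rw [← integral_fIH m hm t]
      apply intervalIntegral.integral_nonneg zero_le_one
      intro u _
      exact ih _

lemma volume_Sl (m : ℕ) (hm : 1 ≤ m) : ∀ t, volume (Sl m t) = ENNReal.ofReal (fIH m t) := by
  induction m, hm using Nat.le_induction with
  | base => exact volume_Sl_one
  | succ m hm ih =>
      intro t
      set T : Set (ℝ × (Fin m → ℝ)) :=
        {p | p.1 ∈ Set.Ico (0:ℝ) 1 ∧ (∀ i, p.2 i ∈ Set.Ico (0:ℝ) 1) ∧ p.1 + ∑ i, p.2 i ≤ t}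
        with hTdef
      have hT : MeasurableSet T := by
        apply MeasurableSet.inter
        · exact measurable_fst measurableSet_Ico
        apply MeasurableSet.inter
        · have : MeasurableSet {y : Fin m → ℝ | ∀ i, y i ∈ Set.Ico (0:ℝ) 1} := by
            have : {y : Fin m → ℝ | ∀ i, y i ∈ Set.Ico (0:ℝ) 1}
                = Set.univ.pi (fun _ : Fin m => Set.Ico (0:ℝ) 1) := by
              ext y
              simp [Set.mem_pi]
            rw [this]
            exact MeasurableSet.univ_pi fun _ => measurableSet_Ico
          exact measurable_snd this
        · show MeasurableSet {p : ℝ × (Fin m → ℝ) | p.1 + ∑ i, p.2 i ≤ t}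
          apply measurableSet_le _ measurable_const
          exact measurable_fst.add
            ((Finset.measurable_sum _ fun i _ => measurable_pi_apply i).comp measurable_snd)
      have hpre : Sl (m + 1) t = (MeasurableEquiv.piFinSuccAbove (fun _ => ℝ) 0) ⁻¹' T := by
        ext x
        simp only [Sl, Set.mem_preimage, Set.mem_setOf_eq, hTdef,
          MeasurableEquiv.piFinSuccAbove_apply, Fin.succAbove_zero]
        rw [Fin.forall_fin_succ, Fin.sum_univ_succ]
        tauto
      rw [hpre,
        (volume_preserving_piFinSuccAbove (fun _ : Fin (m+1) => ℝ) 0).measure_preimage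
          hT.nullMeasurableSet]
      rw [MeasureTheory.Measure.volume_eq_prod, Measure.prod_apply hT]
      have hslice : ∀ a : ℝ, volume (Prod.mk a ⁻¹' T)
          = Set.indicator (Set.Ico (0:ℝ) 1)
              (fun a => ENNReal.ofReal (fIH m (t - a))) a := by
        intro a
        by_cases ha : a ∈ Set.Ico (0:ℝ) 1
        · rw [Set.indicator_of_mem ha]
          have : Prod.mk a ⁻¹' T = Sl m (t - a) := by
            ext y
            simp only [Set.mem_preimage, hTdef, Set.mem_setOf_eq, Sl]
            constructor
            · rintro ⟨_, h2, h3⟩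
              exact ⟨h2, by linarith⟩
            · rintro ⟨h2, h3⟩
              exact ⟨ha, h2, by linarith⟩
          rw [this, ih]
        · rw [Set.indicator_of_notMem ha]
          have : Prod.mk a ⁻¹' T = ∅ := by
            ext y
            simp only [Set.mem_preimage, hTdef, Set.mem_setOf_eq, Set.mem_empty_iff_false,
              iff_false]
            rintro ⟨h1, _, _⟩
            exact ha h1
          rw [this]
          simp
      simp_rw [hslice]
      rw [lintegral_indicator measurableSet_Ico]
      have hcont : Continuous (fun a : ℝ => fIH m (t - a)) :=
        (continuous_fIH m).comp (continuous_const.sub continuous_id)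
      have hint : MeasureTheory.IntegrableOn (fun a : ℝ => fIH m (t - a)) (Set.Ico (0:ℝ) 1) :=
        (hcont.integrableOn_Icc (a := 0) (b := 1)).mono_set Set.Ico_subset_Icc_self
      rw [← MeasureTheory.ofReal_integral_eq_lintegral_ofReal hint
        (Filter.Eventually.of_forall fun a => fIH_nonneg m hm _)]
      congr 1
      rw [MeasureTheory.integral_Ico_eq_integral_Ioo,
        ← MeasureTheory.integral_Ioc_eq_integral_Ioo,
        ← intervalIntegral.integral_of_le zero_le_one]
      exact integral_fIH m hm t

def W (m k : ℕ) : ℤ :=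
  ∑ j ∈ Finset.range k, (-1 : ℤ) ^ j * ((m + 1).choose j : ℤ) * ((k - j : ℕ) : ℤ) ^ m

lemma pascal_sum_general (m K : ℕ) (Q : ℕ → ℝ) :
    ∑ j ∈ Finset.range (K + 1), (-1:ℝ)^j * (((m+1).choose j) : ℝ) * Q j
      = (∑ j ∈ Finset.range (K + 1), (-1:ℝ)^j * ((m.choose j) : ℝ) * Q j)
        - ∑ j ∈ Finset.range K, (-1:ℝ)^j * ((m.choose j) : ℝ) * Q (j+1) := by
  rw [Finset.sum_range_succ' (fun j => (-1:ℝ)^j * (((m+1).choose j) : ℝ) * Q j) K,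
    Finset.sum_range_succ' (fun j => (-1:ℝ)^j * ((m.choose j) : ℝ) * Q j) K]
  have e3 : ∑ j ∈ Finset.range K, (-1:ℝ)^j * ((m.choose j) : ℝ) * Q (j+1)
      = - ∑ i ∈ Finset.range K, (-1:ℝ)^(i+1) * ((m.choose i) : ℝ) * Q (i+1) := by
    rw [← Finset.sum_neg_distrib]
    apply Finset.sum_congr rfl
    intro j _
    ring
  have e4 : ∀ i ∈ Finset.range K,
      (-1:ℝ)^(i+1) * (((m+1).choose (i+1)) : ℝ) * Q (i+1)
      = (-1:ℝ)^(i+1) * ((m.choose i) : ℝ) * Q (i+1)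
        + (-1:ℝ)^(i+1) * ((m.choose (i+1)) : ℝ) * Q (i+1) := by
    intro i _
    rw [Nat.choose_succ_succ]
    push_cast
    ring
  rw [Finset.sum_congr rfl e4, Finset.sum_add_distrib, e3]
  simp
  ring

lemma fIH_cast (m k : ℕ) (hm : 1 ≤ m) (hk : k ≤ m + 1) :
    fIH m (k : ℝ) = (∑ j ∈ Finset.range k,
      (-1:ℝ)^j * ((m.choose j) : ℝ) * (((k - j : ℕ) : ℝ))^m) / (m.factorial : ℝ) := by
  rw [fIH]
  congr 1
  rw [← Finset.sum_subset (Finset.range_subset_range.mpr hk)]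
  apply Finset.sum_congr rfl
  intro j hj
  have hj' : j < k := Finset.mem_range.mp hj
  have hle : (j:ℝ) ≤ (k:ℝ) := by exact_mod_cast hj'.le
  rw [max_eq_left (sub_nonneg.mpr hle), Nat.cast_sub hj'.le]
  intro j _ hj'
  have hkj : (k:ℝ) ≤ (j:ℝ) := by
    have : k ≤ j := by
      by_contra h
      exact hj' (Finset.mem_range.mpr (by omega))
    exact_mod_cast this
  rw [max_eq_right (by linarith), zero_pow (by omega : m ≠ 0), mul_zero]

lemma fIH_sub (m k : ℕ) (hm : 1 ≤ m) (hk : 1 ≤ k) (hkm : k ≤ m + 1) :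
    fIH m (k : ℝ) - fIH m ((k:ℝ) - 1) = ((W m k : ℤ) : ℝ) / (m.factorial : ℝ) := by
  obtain ⟨K, rfl⟩ : ∃ K, k = K + 1 := ⟨k - 1, by omega⟩
  rw [show (((K+1:ℕ)):ℝ) - 1 = ((K:ℕ):ℝ) from by push_cast; ring]
  rw [fIH_cast m (K+1) hm hkm, fIH_cast m K hm (by omega), div_sub_div_same]
  congr 1
  have h2 : ∑ j ∈ Finset.range K, (-1:ℝ)^j * ((m.choose j):ℝ) * ((K - j:ℕ):ℝ)^m
      = ∑ j ∈ Finset.range K, (-1:ℝ)^j * ((m.choose j):ℝ) * ((K + 1 - (j+1):ℕ):ℝ)^m := by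
    apply Finset.sum_congr rfl
    intro j _
    congr 3
    omega
  rw [h2, ← pascal_sum_general m K (fun j => ((K + 1 - j : ℕ):ℝ)^m), W]
  push_cast
  rfl

lemma Sl_box (m : ℕ) (hm : 1 ≤ m) : Sl m ((m:ℝ) + 1) = Sl m (m:ℝ) := by
  ext x
  simp only [Sl, Set.mem_setOf_eq]
  constructor
  · rintro ⟨hbox, _⟩
    refine ⟨hbox, ?_⟩
    calc ∑ i, x i ≤ ∑ _i : Fin m, (1:ℝ) := Finset.sum_le_sum fun i _ => (hbox i).2.le
      _ = m := by simp
  · rintro ⟨hbox, hs⟩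
    exact ⟨hbox, by linarith⟩

lemma W_top (m : ℕ) (hm : 1 ≤ m) : W m (m + 1) = 0 := by
  have e : fIH m (((m+1:ℕ)):ℝ) = fIH m ((m:ℕ):ℝ) := by
    apply (ENNReal.ofReal_eq_ofReal_iff (fIH_nonneg m hm _) (fIH_nonneg m hm _)).mp
    rw [← volume_Sl m hm, ← volume_Sl m hm]
    congr 1
    rw [show ((m+1:ℕ):ℝ) = (m:ℝ)+1 from by push_cast; ring, Sl_box m hm]
  have h := fIH_sub m (m+1) hm (by omega) (by omega)
  rw [show ((m+1:ℕ):ℝ) - 1 = ((m:ℕ):ℝ) from by push_cast; ring, e, sub_self] at h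
  have h2 : ((W m (m+1) : ℤ):ℝ) = 0 := by
    have hfac : (m.factorial : ℝ) ≠ 0 := Nat.cast_ne_zero.mpr (Nat.factorial_ne_zero m)
    field_simp at h
    linarith [h]
  exact_mod_cast h2

lemma eulerianA_zero : ∀ m, eulerianA m 0 = 0
  | 0 => rfl
  | 1 => by simp [eulerianA]
  | (n + 2) => by
      rw [eulerianA]
      simp [eulerianA_zero (n + 1)]

lemma eulerianA_eq_zero_of_lt : ∀ m k, m < k → eulerianA m k = 0
  | 0, k, _ => rfl
  | 1, k, h => by
      simp only [eulerianA, if_neg (by omega : ¬ k = 1)]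
  | (n + 2), k, h => by
      rw [eulerianA]
      rw [eulerianA_eq_zero_of_lt (n + 1) (k - 1) (by omega),
        eulerianA_eq_zero_of_lt (n + 1) k (by omega)]
      ring

lemma W_rec (m K : ℕ) (hK : K ≤ m + 1) :
    W (m + 1) (K + 1) = ((m + 1 - K : ℕ) : ℤ) * W m K + ((K : ℤ) + 1) * W m (K + 1) := by
  have h1 : W (m + 1) (K + 1)
      = (∑ i ∈ Finset.range K, (-1 : ℤ) ^ (i + 1) * ((m + 2).choose (i + 1) : ℤ)
          * ((K - i : ℕ) : ℤ) ^ (m + 1)) + ((K : ℤ) + 1) ^ (m + 1) := by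
    rw [W, Finset.sum_range_succ']
    congr 1
    · apply Finset.sum_congr rfl
      intro i _
      congr 2
      omega
    · simp
  have h2 : W m (K + 1)
      = (∑ i ∈ Finset.range K, (-1 : ℤ) ^ (i + 1) * ((m + 1).choose (i + 1) : ℤ)
          * ((K - i : ℕ) : ℤ) ^ m) + ((K : ℤ) + 1) ^ m := by
    rw [W, Finset.sum_range_succ']
    congr 1
    · apply Finset.sum_congr rfl
      intro i _
      congr 2
      omega
    · simp
  have hmK : ((m + 1 - K : ℕ) : ℤ) = (m : ℤ) + 1 - K := by omega
  rw [h1, h2, W, hmK]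
  rw [Finset.mul_sum, mul_add, Finset.mul_sum, ← add_assoc, ← Finset.sum_add_distrib]
  congr 1
  · apply Finset.sum_congr rfl
    intro i hi
    have hi' : i < K := Finset.mem_range.mp hi
    have hKi : ((K - i : ℕ) : ℤ) = (K : ℤ) - i := by omega
    have key : ((m + 1).choose (i + 1) : ℤ) * (i + 1) = ((m + 1).choose i : ℤ) * ((m : ℤ) + 1 - i) := by
      have := Nat.choose_succ_right_eq (m + 1) i
      have h' : ((m + 1 - i : ℕ) : ℤ) = (m : ℤ) + 1 - i := by omega
      rw [← h']
      exact_mod_cast this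
    have pascal : ((m + 2).choose (i + 1) : ℤ) = ((m + 1).choose i : ℤ) + ((m + 1).choose (i + 1) : ℤ) := by
      exact_mod_cast Nat.choose_succ_succ (m + 1) i
    rw [hKi, pascal]
    linear_combination ((-1 : ℤ) ^ i * ((K : ℤ) - i) ^ m) * key
  · ring

lemma W_zero (m : ℕ) : W m 0 = 0 := by simp [W]

lemma eulerianA_rec (m k : ℕ) (hm : 1 ≤ m) :
    eulerianA (m + 1) k = ((m + 1 - k + 1 : ℕ) : ℤ) * eulerianA m (k - 1)
      + (k : ℤ) * eulerianA m k := by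
  obtain ⟨n, rfl⟩ : ∃ n, m = n + 1 := ⟨m - 1, by omega⟩
  rw [eulerianA]

lemma eulerianA_eq_W (m : ℕ) (hm : 1 ≤ m) : ∀ k, 1 ≤ k → k ≤ m → eulerianA m k = W m k := by
  induction m, hm using Nat.le_induction with
  | base =>
      intro k hk1 hk2
      have hk : k = 1 := by omega
      subst hk
      simp [eulerianA, W]
  | succ m hm ih =>
      intro k hk1 hk2
      obtain ⟨K, rfl⟩ : ∃ K, k = K + 1 := ⟨k - 1, by omega⟩
      rw [eulerianA_rec m (K + 1) hm, show m + 1 - (K + 1) + 1 = m + 1 - K from by omega,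
        W_rec m K (by omega)]
      have e1 : eulerianA m K = W m K := by
        rcases Nat.eq_zero_or_pos K with h | h
        · subst h; rw [eulerianA_zero, W_zero]
        · exact ih K h (by omega)
      have e2 : eulerianA m (K + 1) = W m (K + 1) := by
        by_cases h : K + 1 ≤ m
        · exact ih (K + 1) (by omega) h
        · have hKm : K = m := by omega
          subst hKm
          rw [eulerianA_eq_zero_of_lt K (K + 1) (by omega), W_top K hm]
      simp only [Nat.add_sub_cancel]
      rw [e1, e2]
      push_cast
      ring

open MeasureTheory in
theorem stmt_15 (n k : ℕ) (hn : 2 ≤ n) (hk1 : 1 ≤ k) (hk2 : k ≤ n - 1) :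
    volume {x : Fin (n - 1) → ℝ | (∀ i, x i ∈ Set.Ico (0 : ℝ) 1) ∧ ⌈∑ i, x i⌉ = (k : ℤ)}
      = ENNReal.ofReal ((eulerianA (n - 1) k : ℝ) / ((n - 1).factorial : ℝ)) := by
  set m := n - 1 with hmdef
  have hm : 1 ≤ m := by omega
  have hkm : k ≤ m := hk2
  have hset : {x : Fin m → ℝ | (∀ i, x i ∈ Set.Ico (0 : ℝ) 1) ∧ ⌈∑ i, x i⌉ = (k : ℤ)}
      = Sl m (k:ℝ) \ Sl m ((k:ℝ) - 1) := by
    ext x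
    simp only [Set.mem_setOf_eq, Set.mem_diff, Sl]
    constructor
    · rintro ⟨hbox, hceil⟩
      rw [Int.ceil_eq_iff] at hceil
      obtain ⟨hgt, hle⟩ := hceil
      have hgt' : (k:ℝ) - 1 < ∑ i, x i := by push_cast at hgt ⊢; linarith
      have hle' : ∑ i, x i ≤ (k:ℝ) := by push_cast at hle ⊢; linarith
      refine ⟨⟨hbox, hle'⟩, ?_⟩
      rintro ⟨_, hc⟩
      linarith
    · rintro ⟨⟨hbox, hle⟩, hnot⟩
      refine ⟨hbox, ?_⟩
      rw [Int.ceil_eq_iff]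
      constructor
      · push_cast
        by_contra hcon
        push_neg at hcon
        exact hnot ⟨hbox, by linarith⟩
      · push_cast
        exact hle
  rw [hset]
  have hsub : Sl m ((k:ℝ) - 1) ⊆ Sl m (k:ℝ) := by
    rintro x ⟨hbox, hs⟩
    exact ⟨hbox, by linarith⟩
  rw [measure_diff hsub (measurableSet_Sl m _).nullMeasurableSet
    (by rw [volume_Sl m hm]; exact ENNReal.ofReal_ne_top)]
  rw [volume_Sl m hm, volume_Sl m hm, ← ENNReal.ofReal_sub _ (fIH_nonneg m hm _)]
  rw [fIH_sub m k hm hk1 (by omega), eulerianA_eq_W m hm k hk1 hkm]
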